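/- Let 0 < l < 1. The density f_a of D_a = √a (X_a - l), where X_a ~ Beta(al, a(1-l)), converges pointwise as a → ∞ to the density of the normal distribution N(0, l(1-l)); i.e., for every y ∈ ℝ, f_a(y) → (1/√(2π l(1-l))) exp(-y²/(2 l(1-l))). -/

import Mathlib

open Filter Real MeasureTheory



lemma log_taylor2 {x : ℝ} (h : |x| ≤ 1/2) : |x + x^2/2 + Real.log (1-x)| ≤ 2*|x|^3 := by
  have h1 : |x| < 1 := lt_of_le_of_lt h (by norm_num)
  have H := Real.abs_log_sub_add_sum_range_le h1 2
  rw [Finset.sum_range_succ, Finset.sum_range_one] at H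
  norm_num at H
  have hle : |x| ^ 3 / (1 - |x|) ≤ 2 * |x| ^ 3 := by
    rw [div_le_iff₀ (by linarith)]
    nlinarith [pow_nonneg (abs_nonneg x) 3]
  calc |x + x^2/2 + Real.log (1-x)| ≤ |x|^3/(1-|x|) := by
        convert H using 2
    _ ≤ 2*|x|^3 := hle


lemma core_limit (c : ℝ) (hc : 0 < c) (y : ℝ) :
    Tendsto (fun a : ℝ => a * c * Real.log (1 + y / (c * Real.sqrt a)) - y * Real.sqrt a)
      atTop (nhds (-(y^2) / (2*c))) := by
  have key : Tendsto (fun a : ℝ => (a * c * Real.log (1 + y / (c * Real.sqrt a)) - y * Real.sqrt a)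
      - (-(y^2) / (2*c))) atTop (nhds 0) := by
    apply squeeze_zero_norm' (a := fun a : ℝ => 2 * |y|^3 / (c^2 * Real.sqrt a))
    · filter_upwards [eventually_ge_atTop (max 1 ((2*|y|/c)^2))] with a ha
      have ha1 : (1:ℝ) ≤ a := le_trans (le_max_left _ _) ha
      have ha0 : 0 < a := by linarith
      have hs : 0 < Real.sqrt a := Real.sqrt_pos.mpr ha0
      have hs1 : 1 ≤ Real.sqrt a := by
        rw [show (1:ℝ) = Real.sqrt 1 by simp]; exact Real.sqrt_le_sqrt ha1
      have hsa : Real.sqrt a * Real.sqrt a = a := Real.mul_self_sqrt ha0.le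
      set x : ℝ := -y / (c * Real.sqrt a) with hx
      have hys : 2 * |y| / c ≤ Real.sqrt a := by
        have := le_trans (le_max_right 1 ((2*|y|/c)^2)) ha
        nlinarith [abs_nonneg y, Real.sq_sqrt ha0.le, hs]
      have hxb : |x| ≤ 1/2 := by
        rw [hx, abs_div, abs_neg, abs_of_pos (by positivity : (0:ℝ) < c * Real.sqrt a)]
        rw [div_le_iff₀ (by positivity)]
        rw [div_le_iff₀ hc] at hys
        nlinarith
      have hlog : (1 : ℝ) + y / (c * Real.sqrt a) = 1 - x := by
        rw [hx]; ring
      have hx1 : a * c * x = -(y * Real.sqrt a) := by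
        rw [hx]; field_simp; linear_combination y * hsa
      have hx2 : a * c * (x^2/2) = y^2/(2*c) := by
        rw [hx]; field_simp; linear_combination (-y^2) * hsa
      have hid : a * c * Real.log (1 + y / (c * Real.sqrt a)) - y * Real.sqrt a - (-(y^2) / (2*c))
          = a * c * (x + x^2/2 + Real.log (1-x)) := by
        rw [hlog]; linear_combination -hx1 - hx2
      rw [hid]
      have hb := log_taylor2 hxb
      have hxa : |x| = |y| / (c * Real.sqrt a) := by
        rw [hx, abs_div, abs_neg, abs_of_pos (by positivity : (0:ℝ) < c * Real.sqrt a)]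
      calc ‖a * c * (x + x^2/2 + Real.log (1-x))‖
          = a * c * |x + x^2/2 + Real.log (1-x)| := by
            rw [norm_eq_abs, abs_mul, abs_of_pos (by positivity : (0:ℝ) < a * c)]
        _ ≤ a * c * (2 * |x|^3) := by
            apply mul_le_mul_of_nonneg_left hb (by positivity)
        _ = 2 * |y|^3 / (c^2 * Real.sqrt a) := by
            rw [hxa]
            field_simp
            linear_combination (-|y|^3) * hsa
    · have hsqrt : Tendsto Real.sqrt atTop atTop := by
        refine tendsto_atTop_atTop_of_monotone (fun x y h => Real.sqrt_le_sqrt h) (fun b => ?_)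
        exact ⟨(max b 0)^2, by rw [Real.sqrt_sq (le_max_right b 0)]; exact le_max_left b 0⟩
      have hsq : Tendsto (fun a : ℝ => c^2 * Real.sqrt a) atTop atTop :=
        hsqrt.const_mul_atTop (by positivity)
      simpa using (tendsto_const_nhds (x := (2 * |y|^3 : ℝ))).div_atTop hsq
  have := key.add_const (-(y^2) / (2*c))
  simpa using this


noncomputable def stirDelta (x : ℝ) : ℝ :=
  Real.log (Real.Gamma x) - ((x - 1/2) * Real.log x - x)

lemma delta_seq : Tendsto (fun n : ℕ => stirDelta ((n:ℝ)+1)) atTop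
    (nhds (Real.log (Real.sqrt (2*Real.pi)))) := by
  have h1 : ∀ n : ℕ, 1 ≤ n → stirDelta ((n:ℝ)+1)
      = Real.log (Stirling.stirlingSeq n) + (1/2)*Real.log 2 + 1
        - ((n:ℝ)+1/2)*Real.log (1+1/(n:ℝ)) := by
    intro n hn
    have hn0 : (0:ℝ) < n := by exact_mod_cast hn
    have hf := Stirling.log_stirlingSeq_formula n
    rw [Real.log_mul two_ne_zero hn0.ne', Real.log_div hn0.ne' (Real.exp_ne_zero 1),
      Real.log_exp] at hf
    have h1n : (1:ℝ) + 1/(n:ℝ) = ((n:ℝ)+1)/(n:ℝ) := by field_simp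
    rw [stirDelta, Real.Gamma_nat_eq_factorial, h1n,
      Real.log_div (by positivity) hn0.ne']
    linear_combination -hf
  have h2 : Tendsto (fun n:ℕ => Real.log (Stirling.stirlingSeq n)) atTop
      (nhds (Real.log (Real.sqrt Real.pi))) :=
    Stirling.tendsto_stirlingSeq_sqrt_pi.log (by positivity)
  have h4 : Tendsto (fun n:ℕ => Real.log (1+1/(n:ℝ))) atTop (nhds 0) := by
    have : Tendsto (fun n:ℕ => (1:ℝ)+1/(n:ℝ)) atTop (nhds 1) := by
      simpa using (tendsto_const_nhds (x := (1:ℝ))).add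
        (tendsto_one_div_atTop_nhds_zero_nat)
    simpa using this.log one_ne_zero
  have h3 : Tendsto (fun n:ℕ => ((n:ℝ)+1/2)*Real.log (1+1/(n:ℝ))) atTop (nhds 1) := by
    have ha : Tendsto (fun n:ℕ => (n:ℝ)*Real.log (1+1/(n:ℝ))) atTop (nhds 1) :=
      (Real.tendsto_mul_log_one_add_div_atTop 1).comp tendsto_natCast_atTop_atTop
    have := ha.add (h4.const_mul (1/2))
    simp only [mul_zero, add_zero] at this
    apply this.congr
    intro n; ring
  have key := (h2.add_const ((1/2)*Real.log 2)).add_const 1 |>.sub h3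
  have hval : Real.log (Real.sqrt Real.pi) + (1/2)*Real.log 2 + 1 - 1
      = Real.log (Real.sqrt (2*Real.pi)) := by
    rw [show Real.sqrt (2*Real.pi) = Real.sqrt 2 * Real.sqrt Real.pi from
      Real.sqrt_mul (by norm_num) _, Real.log_mul (by positivity) (by positivity),
      Real.log_sqrt Real.pi_pos.le, Real.log_sqrt (by norm_num : (0:ℝ) ≤ 2)]
    ring
  rw [← hval]
  apply key.congr'
  filter_upwards [eventually_ge_atTop 1] with n hn
  rw [h1 n hn]


lemma gamma_feq : ∀ {y : ℝ}, 0 < y →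
    (Real.log ∘ Real.Gamma) (y+1) = (Real.log ∘ Real.Gamma) y + Real.log y := by
  intro y hy
  rw [Function.comp_apply, Real.Gamma_add_one hy.ne',
    Real.log_mul hy.ne' (Real.Gamma_pos_of_pos hy).ne', add_comm, Function.comp_apply]

set_option maxHeartbeats 1000000 in
lemma delta_bound (x : ℝ) (hx : 2 ≤ x) :
    |stirDelta x - stirDelta (⌊x⌋₊ : ℝ)| ≤ 5 / (⌊x⌋₊ : ℝ) := by
  set n : ℕ := ⌊x⌋₊ with hn
  clear_value n
  have hx0 : (0:ℝ) ≤ x := by linarith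
  have hn2 : 2 ≤ n := by rw [hn]; exact Nat.le_floor (by exact_mod_cast hx)
  have hnx : (n:ℝ) ≤ x := by rw [hn]; exact Nat.floor_le hx0
  have hxn : x < (n:ℝ) + 1 := by rw [hn]; exact Nat.lt_floor_add_one x
  have hn2' : (2:ℝ) ≤ (n:ℝ) := by exact_mod_cast hn2
  have hn0 : (0:ℝ) < (n:ℝ) := by linarith
  set t : ℝ := x - n with htdef
  clear_value t
  have ht0 : 0 ≤ t := by simp [htdef]; linarith
  have ht1 : t ≤ 1 := by simp [htdef]; linarith
  rcases eq_or_lt_of_le ht0 with h0 | htpos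
  · have : x = (n:ℝ) := by simp [htdef] at h0; linarith
    rw [this]
    simp
    positivity
  · -- main case 0 < t
    have hxnt : x = (n:ℝ) + t := by simp [htdef]
    -- Gamma bounds
    have hub := Real.BohrMollerup.f_add_nat_le Real.convexOn_log_Gamma gamma_feq
      (n := n) (x := t) (by omega) htpos ht1
    have hlb := Real.BohrMollerup.f_add_nat_ge Real.convexOn_log_Gamma gamma_feq
      (n := n) (x := t) hn2 htpos
    rw [← hxnt] at hub hlb
    simp only [Function.comp_apply] at hub hlb
    -- the log ratio s = t/n
    set s : ℝ := t / n with hsdef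
    clear_value s
    have hs0 : 0 ≤ s := by rw [hsdef]; positivity
    have hns : (n:ℝ) * s = t := by rw [hsdef]; field_simp
    have hxlog : Real.log x = Real.log n + Real.log (1 + s) := by
      have : (1:ℝ) + s = x / n := by rw [hsdef]; field_simp; linarith [hxnt]
      rw [this, Real.log_div (by linarith) hn0.ne']
      ring
    have hL1 : Real.log (1 + s) ≤ s := by
      have := Real.log_le_sub_one_of_pos (by linarith : (0:ℝ) < 1 + s)
      linarith
    have hL2 : s - s^2 ≤ Real.log (1 + s) := by
      have hinv := Real.log_le_sub_one_of_pos (by positivity : (0:ℝ) < (1 + s)⁻¹)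
      rw [Real.log_inv] at hinv
      have h1 : (1 + s)⁻¹ - 1 = -(s / (1+s)) := by field_simp; ring
      rw [h1] at hinv
      have h2 : s - s^2 ≤ s / (1+s) := by
        rw [le_div_iff₀ (by linarith : (0:ℝ) < 1 + s)]
        nlinarith [pow_nonneg hs0 3]
      linarith
    have hsn : s * n = t := by linarith [hns]
    have hs_half : s ≤ 1/2 := by
      rw [hsdef, div_le_iff₀ hn0]; linarith
    have hx12 : (0:ℝ) ≤ x - 1/2 := by linarith
    have hexp1 : (t - (x - 1/2)*(s - s^2))*(n:ℝ) = t/2 + t*(t-1/2)*s := by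
      rw [hsdef, hxnt]; field_simp; ring
    have hexp2 : ((x - 1/2)*s - t)*(n:ℝ) = t^2 - t/2 := by
      rw [hsdef, hxnt]; field_simp; ring
    have hElb : -(3 / (n:ℝ)) ≤ t - (x - 1/2) * Real.log (1+s) := by
      have h0 : -(t - (x - 1/2) * Real.log (1+s)) = (x - 1/2) * Real.log (1+s) - t := by ring
      rw [neg_le, h0, le_div_iff₀ hn0]
      calc ((x - 1/2) * Real.log (1+s) - t)*(n:ℝ)
          ≤ ((x - 1/2)*s - t)*(n:ℝ) := by
            apply mul_le_mul_of_nonneg_right _ hn0.le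
            have := mul_le_mul_of_nonneg_left hL1 hx12
            linarith
        _ = t^2 - t/2 := hexp2
        _ ≤ 3 := by nlinarith
    have hEub : t - (x - 1/2) * Real.log (1+s) ≤ 3 / (n:ℝ) := by
      rw [le_div_iff₀ hn0]
      calc (t - (x - 1/2) * Real.log (1+s))*(n:ℝ)
          ≤ (t - (x - 1/2)*(s - s^2))*(n:ℝ) := by
            apply mul_le_mul_of_nonneg_right _ hn0.le
            have := mul_le_mul_of_nonneg_left hL2 hx12
            linarith
        _ = t/2 + t*(t-1/2)*s := hexp1
        _ ≤ 3 := by nlinarith [mul_nonneg (mul_nonneg ht0 ht0) hs0, mul_nonneg ht0 hs0]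
    have hid : stirDelta x - stirDelta (n:ℝ)
        = (Real.log (Real.Gamma x) - Real.log (Real.Gamma (n:ℝ)) - t * Real.log (n:ℝ))
          + (t - (x - 1/2) * Real.log (1+s)) := by
      simp only [stirDelta]
      rw [hxlog, htdef]; ring
    have hup : stirDelta x - stirDelta (n:ℝ) ≤ t - (x - 1/2) * Real.log (1+s) := by
      rw [hid]; linarith [hub]
    have hdown : (t - (x - 1/2) * Real.log (1+s)) - t * (Real.log n - Real.log ((n:ℝ)-1))
        ≤ stirDelta x - stirDelta (n:ℝ) := by
      rw [hid]; nlinarith [hlb]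
    have hgap : 0 ≤ t * (Real.log n - Real.log ((n:ℝ)-1)) ∧
        t * (Real.log n - Real.log ((n:ℝ)-1)) ≤ 2 / (n:ℝ) := by
      have hn1 : (0:ℝ) < (n:ℝ) - 1 := by linarith
      have hmono : Real.log ((n:ℝ)-1) ≤ Real.log n := by
        apply Real.log_le_log hn1; linarith
      have hsub : Real.log n - Real.log ((n:ℝ)-1) = Real.log ((n:ℝ)/((n:ℝ)-1)) := by
        rw [Real.log_div hn0.ne' hn1.ne']
      have hb : Real.log ((n:ℝ)/((n:ℝ)-1)) ≤ (n:ℝ)/((n:ℝ)-1) - 1 :=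
        Real.log_le_sub_one_of_pos (by positivity)
      have hq : (n:ℝ)/((n:ℝ)-1) - 1 = 1/((n:ℝ)-1) := by field_simp; ring
      constructor
      · exact mul_nonneg ht0 (by linarith)
      · have h2n : 1/((n:ℝ)-1) ≤ 2/(n:ℝ) := by
          rw [div_le_div_iff₀ hn1 hn0]; linarith
        calc t * (Real.log n - Real.log ((n:ℝ)-1)) ≤ 1 * (Real.log n - Real.log ((n:ℝ)-1)) := by
              apply mul_le_mul_of_nonneg_right ht1 (by linarith)
          _ = Real.log n - Real.log ((n:ℝ)-1) := one_mul _
          _ ≤ 2/(n:ℝ) := by rw [hsub]; linarith [hb, hq.le, h2n]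
    have hninv : (0:ℝ) ≤ ((n:ℝ))⁻¹ := by positivity
    apply abs_le.mpr
    constructor
    · have h5 : -(5/(n:ℝ)) = -(3/(n:ℝ)) - 2/(n:ℝ) := by ring
      rw [h5]
      linarith [hgap.1, hgap.2, hElb, hdown]
    · have h35 : (3:ℝ)/(n:ℝ) ≤ 5/(n:ℝ) := by
        apply div_le_div_of_nonneg_right (by norm_num) hn0.le
      linarith [hup, hEub, h35]


lemma delta_tendsto : Tendsto stirDelta atTop (nhds (Real.log (Real.sqrt (2*Real.pi)))) := by
  have hseq : Tendsto (fun n : ℕ => stirDelta (n:ℝ)) atTop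
      (nhds (Real.log (Real.sqrt (2*Real.pi)))) := by
    rw [← tendsto_add_atTop_iff_nat 1]
    exact delta_seq.congr (fun n => by push_cast; ring_nf)
  have h1 : Tendsto (fun x : ℝ => stirDelta (⌊x⌋₊ : ℝ)) atTop
      (nhds (Real.log (Real.sqrt (2*Real.pi)))) := hseq.comp tendsto_nat_floor_atTop
  have h2 : Tendsto (fun x : ℝ => stirDelta x - stirDelta (⌊x⌋₊ : ℝ)) atTop (nhds 0) := by
    apply squeeze_zero_norm' (a := fun x : ℝ => 5 / (⌊x⌋₊ : ℝ))
    · filter_upwards [eventually_ge_atTop 2] with x hx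
      exact delta_bound x hx
    · exact (tendsto_const_div_atTop_nhds_zero_nat 5).comp tendsto_nat_floor_atTop
  simpa using h2.add h1



lemma tendsto_sqrt_atTop' : Tendsto Real.sqrt atTop atTop := by
  refine tendsto_atTop_atTop_of_monotone (fun x y h => Real.sqrt_le_sqrt h) (fun b => ?_)
  exact ⟨(max b 0)^2, by rw [Real.sqrt_sq (le_max_right b 0)]; exact le_max_left b 0⟩

/-- The density of the `Beta(al, a(1-l))` distribution. -/
noncomputable def betaPDF (α β x : ℝ) : ℝ :=
  if 0 < x ∧ x < 1 then
    Real.Gamma (α + β) / (Real.Gamma α * Real.Gamma β) * x ^ (α - 1) * (1 - x) ^ (β - 1)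
  else 0

/-- The density of `√a (X_a - l)` where `X_a ~ Beta(al, a(1-l))` converges pointwise to the
density of `N(0, l(1-l))`. -/
theorem beta_scaled_density_tendsto_gaussian (l : ℝ) (hl₀ : 0 < l) (hl₁ : l < 1) (y : ℝ) :
    Tendsto (fun a : ℝ =>
        (1 / Real.sqrt a) * betaPDF (a * l) (a * (1 - l)) (y / Real.sqrt a + l))
      atTop
      (nhds ((1 / Real.sqrt (2 * Real.pi * (l * (1 - l)))) *
        Real.exp (-y ^ 2 / (2 * (l * (1 - l)))))) := by
  have hm0 : (0:ℝ) < 1 - l := by linarith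
  -- component tendstos
  have hAl : Tendsto (fun a : ℝ => stirDelta (a*l)) atTop
      (nhds (Real.log (Real.sqrt (2*Real.pi)))) :=
    delta_tendsto.comp (tendsto_id.atTop_mul_const hl₀)
  have hAm : Tendsto (fun a : ℝ => stirDelta (a*(1-l))) atTop
      (nhds (Real.log (Real.sqrt (2*Real.pi)))) :=
    delta_tendsto.comp (tendsto_id.atTop_mul_const hm0)
  have hD : Tendsto (fun a : ℝ => stirDelta a - stirDelta (a*l) - stirDelta (a*(1-l))) atTop
      (nhds (Real.log (Real.sqrt (2*Real.pi)) - Real.log (Real.sqrt (2*Real.pi))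
        - Real.log (Real.sqrt (2*Real.pi)))) := (delta_tendsto.sub hAl).sub hAm
  have hy0 : Tendsto (fun a : ℝ => y / Real.sqrt a) atTop (nhds 0) :=
    tendsto_const_nhds.div_atTop tendsto_sqrt_atTop'
  have hCl : Tendsto (fun a : ℝ => Real.log (l + y / Real.sqrt a)) atTop
      (nhds (Real.log l)) := by
    have h0 : Tendsto (fun a : ℝ => l + y / Real.sqrt a) atTop (nhds l) := by
      simpa using (tendsto_const_nhds (x := l)).add hy0
    exact h0.log hl₀.ne'
  have hCm : Tendsto (fun a : ℝ => Real.log ((1-l) - y / Real.sqrt a)) atTop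
      (nhds (Real.log (1-l))) := by
    have h0 : Tendsto (fun a : ℝ => (1-l) - y / Real.sqrt a) atTop (nhds (1-l)) := by
      simpa using (tendsto_const_nhds (x := (1-l))).sub hy0
    exact h0.log hm0.ne'
  have hC : Tendsto (fun a : ℝ => (1/2)*Real.log l + (1/2)*Real.log (1-l)
      - Real.log (l + y / Real.sqrt a) - Real.log ((1-l) - y / Real.sqrt a)) atTop
      (nhds ((1/2)*Real.log l + (1/2)*Real.log (1-l) - Real.log l - Real.log (1-l))) :=
    (tendsto_const_nhds.sub hCl).sub hCm
  have hTl := core_limit l hl₀ y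
  have hTm := core_limit (1-l) hm0 (-y)
  have hTot := (hD.add hC).add (hTl.add hTm)
  have hexp := (Real.continuous_exp.tendsto _).comp hTot
  -- eventual equality
  have heq : ∀ᶠ a in atTop,
      (1 / Real.sqrt a) * betaPDF (a * l) (a * (1 - l)) (y / Real.sqrt a + l)
      = Real.exp ((stirDelta a - stirDelta (a*l) - stirDelta (a*(1-l))
          + ((1/2)*Real.log l + (1/2)*Real.log (1-l)
            - Real.log (l + y / Real.sqrt a) - Real.log ((1-l) - y / Real.sqrt a)))
        + ((a * l * Real.log (1 + y / (l * Real.sqrt a)) - y * Real.sqrt a)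
          + (a * (1-l) * Real.log (1 + (-y) / ((1-l) * Real.sqrt a)) - (-y) * Real.sqrt a))) := by
    filter_upwards [eventually_gt_atTop 0,
      tendsto_sqrt_atTop'.eventually_gt_atTop (|y|/l),
      tendsto_sqrt_atTop'.eventually_gt_atTop (|y|/(1-l))] with a ha0 hal ham
    have hs0 : 0 < Real.sqrt a := Real.sqrt_pos.mpr ha0
    have hyl : |y| < l * Real.sqrt a := by
      rw [div_lt_iff₀ hl₀] at hal; linarith
    have hym : |y| < (1-l) * Real.sqrt a := by
      rw [div_lt_iff₀ hm0] at ham; linarith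
    have habs := abs_lt.mp hyl
    have habs' := abs_lt.mp hym
    have hx0' : 0 < l + y / Real.sqrt a := by
      have h2 : 0 < (y + l * Real.sqrt a) / Real.sqrt a := div_pos (by linarith) hs0
      have h3 : (y + l * Real.sqrt a) / Real.sqrt a = y / Real.sqrt a + l := by
        field_simp
      rw [h3] at h2; linarith
    have hx0 : 0 < y / Real.sqrt a + l := by linarith
    have hx1 : y / Real.sqrt a + l < 1 := by
      have : y / Real.sqrt a < 1 - l := by
        rw [div_lt_iff₀ hs0]; linarith
      linarith
    have hmy : 0 < (1-l) - y / Real.sqrt a := by linarith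
    rw [betaPDF, if_pos ⟨hx0, hx1⟩,
      show a * l + a * (1 - l) = a by ring,
      show (1:ℝ) - (y / Real.sqrt a + l) = (1-l) - y / Real.sqrt a by ring,
      show y / Real.sqrt a + l = l + y / Real.sqrt a by ring]
    have hΓa : 0 < Real.Gamma a := Real.Gamma_pos_of_pos ha0
    have hΓl : 0 < Real.Gamma (a*l) := Real.Gamma_pos_of_pos (mul_pos ha0 hl₀)
    have hΓm : 0 < Real.Gamma (a*(1-l)) := Real.Gamma_pos_of_pos (mul_pos ha0 hm0)
    have hp1 : (0:ℝ) < (l + y / Real.sqrt a) ^ (a*l - 1) := Real.rpow_pos_of_pos hx0' _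
    have hp2 : (0:ℝ) < ((1-l) - y / Real.sqrt a) ^ (a*(1-l) - 1) := Real.rpow_pos_of_pos hmy _
    have hpos : 0 < 1 / Real.sqrt a * (Real.Gamma a / (Real.Gamma (a*l) * Real.Gamma (a*(1-l)))
        * (l + y / Real.sqrt a) ^ (a*l - 1) * ((1-l) - y / Real.sqrt a) ^ (a*(1-l) - 1)) := by
      positivity
    rw [← Real.exp_log hpos]
    congr 1
    -- log computations
    have hlog1 : Real.log (1 + y / (l * Real.sqrt a))
        = Real.log (l + y / Real.sqrt a) - Real.log l := by
      rw [show (1:ℝ) + y / (l * Real.sqrt a) = (l + y / Real.sqrt a) / l by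
        field_simp]
      rw [Real.log_div hx0'.ne' hl₀.ne']
    have hlog2 : Real.log (1 + (-y) / ((1-l) * Real.sqrt a))
        = Real.log ((1-l) - y / Real.sqrt a) - Real.log (1-l) := by
      rw [show (1:ℝ) + (-y) / ((1-l) * Real.sqrt a) = ((1-l) - y / Real.sqrt a) / (1-l) by
        field_simp
        ring]
      rw [Real.log_div hmy.ne' hm0.ne']
    rw [Real.log_mul (by positivity) (by positivity),
      Real.log_mul (by positivity) (by positivity),
      Real.log_mul (by positivity) (by positivity),
      Real.log_div hΓa.ne' (by positivity),
      Real.log_mul hΓl.ne' hΓm.ne',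
      Real.log_rpow hx0', Real.log_rpow hmy,
      one_div, Real.log_inv, Real.log_sqrt ha0.le]
    simp only [stirDelta]
    rw [hlog1, hlog2, Real.log_mul ha0.ne' hl₀.ne', Real.log_mul ha0.ne' hm0.ne']
    ring
  -- combine
  have hval : (1 / Real.sqrt (2 * Real.pi * (l * (1 - l)))) *
        Real.exp (-y ^ 2 / (2 * (l * (1 - l))))
      = Real.exp ((Real.log (Real.sqrt (2*Real.pi)) - Real.log (Real.sqrt (2*Real.pi))
          - Real.log (Real.sqrt (2*Real.pi))
          + ((1/2)*Real.log l + (1/2)*Real.log (1-l) - Real.log l - Real.log (1-l)))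
        + (-(y^2) / (2*l) + -((-y)^2) / (2*(1-l)))) := by
    rw [Real.exp_add]
    have hq : -(y^2) / (2*l) + -((-y)^2) / (2*(1-l)) = -y^2 / (2 * (l * (1-l))) := by
      field_simp
      ring
    rw [hq]
    congr 1
    have hsplit : Real.log (Real.sqrt (2 * Real.pi * (l * (1 - l))))
        = (1/2) * (Real.log (2*Real.pi) + Real.log l + Real.log (1-l)) := by
      rw [Real.log_sqrt (by positivity),
        show (2*Real.pi*(l*(1-l))) = (2*Real.pi)*l*(1-l) by ring,
        Real.log_mul (by positivity) hm0.ne', Real.log_mul (by positivity) hl₀.ne']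
      ring
    have h2 : Real.log (Real.sqrt (2*Real.pi)) = (1/2) * Real.log (2*Real.pi) := by
      rw [Real.log_sqrt (by positivity)]; ring
    have hX : (0:ℝ) < 2*Real.pi*(l*(1-l)) :=
      mul_pos (by positivity) (mul_pos hl₀ hm0)
    have hA : Real.log (Real.sqrt (2*Real.pi)) - Real.log (Real.sqrt (2*Real.pi))
        - Real.log (Real.sqrt (2*Real.pi))
        + ((1/2)*Real.log l + (1/2)*Real.log (1-l) - Real.log l - Real.log (1-l))
        = -Real.log (Real.sqrt (2*Real.pi*(l*(1-l)))) := by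
      rw [hsplit, h2]; ring
    rw [hA, Real.exp_neg, Real.exp_log (Real.sqrt_pos.mpr hX), one_div]
  rw [hval]
  exact hexp.congr' (Filter.EventuallyEq.symm heq)
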